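/- arXiv:1602.04589 — 2 statements merged into one kernel-verified Lean document; each statement's English description precedes it below -/
import Mathlib

section
/- Let K ≥ 2 and 0 < μ_K ≤ … ≤ μ_2 < μ_1 < 1. Let y* ∈ (0, kl(μ_1,μ_2)) be the unique solution of F_μ(y*) = 1, set x_1(y*) = 1 and, for a ≥ 2, x_a(y*) = g_a^{-1}(y*). Then the vector w* ∈ Σ_K given by w*_a = x_a(y*) / Σ_{b=1}^K x_b(y*) is the unique maximizer over Σ_K of the objective G(w) = min_{a≠1} (w_1+w_a)·I_{w_1/(w_1+w_a)}(μ_1,μ_a). -/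
/-- Bernoulli Kullback–Leibler divergence. -/
noncomputable def kl (x y : ℝ) : ℝ :=
  x * Real.log (x / y) + (1 - x) * Real.log ((1 - x) / (1 - y))

/-- The parameterized Jensen–Shannon-type divergence `I_α`. -/
noncomputable def Ialpha (α x y : ℝ) : ℝ :=
  α * kl x (α * x + (1 - α) * y) + (1 - α) * kl y (α * x + (1 - α) * y)

/-- The probability simplex on `Fin K`. -/
def simplex (K : ℕ) : Set (Fin K → ℝ) :=
  {w | (∀ a, 0 ≤ w a) ∧ ∑ a, w a = 1}

/-- The weighted mean `m_a(x) = (μ₁ + x μₐ)/(1+x)`. -/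
noncomputable def marm (μ1 μa x : ℝ) : ℝ := (μ1 + x * μa) / (1 + x)

/-- The function `g_a(x) = kl(μ₁, m_a(x)) + x·kl(μₐ, m_a(x))`. -/
noncomputable def garm (μ1 μa x : ℝ) : ℝ :=
  kl μ1 (marm μ1 μa x) + x * kl μa (marm μ1 μa x)

lemma erase_zero_nonempty (K : ℕ) :
    ((Finset.univ : Finset (Fin (K + 2))).erase 0).Nonempty :=
  ⟨1, Finset.mem_erase.mpr ⟨by simp [Fin.ext_iff], Finset.mem_univ _⟩⟩

/-- The objective `G(w) = min_{a ≠ 1} (w₁+wₐ)·I_{w₁/(w₁+wₐ)}(μ₁,μₐ)`, with the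
convention that the `a`-th term is `0` when `w₁ + wₐ = 0`. -/
noncomputable def G (K : ℕ) (μ : Fin (K + 2) → ℝ) (w : Fin (K + 2) → ℝ) : ℝ :=
  ((Finset.univ : Finset (Fin (K + 2))).erase 0).inf' (erase_zero_nonempty K)
    (fun a => if w 0 + w a = 0 then 0
      else (w 0 + w a) * Ialpha (w 0 / (w 0 + w a)) (μ 0) (μ a))

lemma kl_expand (p q : ℝ) (hp0 : 0 < p) (hp1 : p < 1) (hq0 : 0 < q) (hq1 : q < 1) :
    kl p q = p * (Real.log p - Real.log q) + (1 - p) * (Real.log (1 - p) - Real.log (1 - q)) := by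
  unfold kl
  rw [Real.log_div hp0.ne' hq0.ne', Real.log_div (by linarith : (1:ℝ) - p ≠ 0) (by linarith : (1:ℝ) - q ≠ 0)]

lemma kl_self (p : ℝ) (hp0 : 0 < p) (hp1 : p < 1) : kl p p = 0 := by
  unfold kl
  rw [div_self hp0.ne', div_self (by linarith : (1:ℝ) - p ≠ 0), Real.log_one]
  ring

lemma kl_pos (p q : ℝ) (hp0 : 0 < p) (hp1 : p < 1) (hq0 : 0 < q) (hq1 : q < 1)
    (hne : p ≠ q) : 0 < kl p q := by
  have hp1' : (0:ℝ) < 1 - p := by linarith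
  have hq1' : (0:ℝ) < 1 - q := by linarith
  have h1 : Real.log (q / p) < q / p - 1 :=
    Real.log_lt_sub_one_of_pos (by positivity) (by
      intro h
      exact hne ((div_eq_one_iff_eq hp0.ne').mp h).symm)
  have h2 : Real.log ((1 - q) / (1 - p)) < (1 - q) / (1 - p) - 1 :=
    Real.log_lt_sub_one_of_pos (by positivity) (by
      intro h
      have := (div_eq_one_iff_eq hp1'.ne').mp h
      exact hne (by linarith))
  have e1 : Real.log (q / p) = Real.log q - Real.log p := Real.log_div hq0.ne' hp0.ne'
  have e2 : Real.log ((1 - q) / (1 - p)) = Real.log (1 - q) - Real.log (1 - p) :=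
    Real.log_div hq1'.ne' hp1'.ne'
  rw [kl_expand p q hp0 hp1 hq0 hq1]
  rw [e1] at h1; rw [e2] at h2
  have d1 : q / p - 1 = (q - p) / p := by field_simp
  have d2 : (1 - q) / (1 - p) - 1 = (p - q) / (1 - p) := by
    rw [div_sub_one hp1'.ne']; ring_nf
  rw [d1] at h1; rw [d2] at h2
  have hm1 := (mul_lt_mul_iff_right₀ hp0).mpr h1
  have hm2 := (mul_lt_mul_iff_right₀ hp1').mpr h2
  rw [mul_div_cancel₀ _ hp0.ne'] at hm1
  rw [mul_div_cancel₀ _ hp1'.ne'] at hm2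
  nlinarith

lemma kl_nonneg (p q : ℝ) (hp0 : 0 < p) (hp1 : p < 1) (hq0 : 0 < q) (hq1 : q < 1) :
    0 ≤ kl p q := by
  by_cases h : p = q
  · subst h; rw [kl_self p hp0 hp1]
  · exact (kl_pos p q hp0 hp1 hq0 hq1 h).le

lemma kl_eq_zero (p q : ℝ) (hp0 : 0 < p) (hp1 : p < 1) (hq0 : 0 < q) (hq1 : q < 1)
    (h : kl p q = 0) : p = q := by
  by_contra hne
  exact absurd h (ne_of_gt (kl_pos p q hp0 hp1 hq0 hq1 hne))

lemma kl_mono (p q1 q2 : ℝ) (hq2 : 0 < q2) (hle : q2 ≤ q1) (h1 : q1 < p) (hp : p < 1) :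
    kl p q1 ≤ kl p q2 := by
  have hq10 : 0 < q1 := lt_of_lt_of_le hq2 hle
  have hp0 : 0 < p := lt_trans hq10 h1
  have h1q1 : (0:ℝ) < 1 - q1 := by linarith
  have h1q2 : (0:ℝ) < 1 - q2 := by linarith
  rw [kl_expand p q1 hp0 hp hq10 (lt_trans h1 hp),
      kl_expand p q2 hp0 hp hq2 (lt_of_le_of_lt hle (lt_trans h1 hp))]
  have hA : Real.log ((1 - q2) / (1 - q1)) ≤ (1 - q2) / (1 - q1) - 1 :=
    Real.log_le_sub_one_of_pos (by positivity)
  have hB : Real.log (q2 / q1) ≤ q2 / q1 - 1 :=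
    Real.log_le_sub_one_of_pos (by positivity)
  rw [Real.log_div h1q2.ne' h1q1.ne'] at hA
  rw [Real.log_div hq2.ne' hq10.ne'] at hB
  have d1 : (1 - q2) / (1 - q1) - 1 = (q1 - q2) / (1 - q1) := by
    rw [div_sub_one h1q1.ne']; ring_nf
  have d2 : q2 / q1 - 1 = -((q1 - q2) / q1) := by
    rw [div_sub_one hq10.ne']; ring_nf
  rw [d1] at hA; rw [d2] at hB
  have hm1 : (1 - p) * (Real.log (1 - q2) - Real.log (1 - q1)) ≤ (1 - p) * ((q1 - q2) / (1 - q1)) :=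
    mul_le_mul_of_nonneg_left hA (by linarith)
  have hm2 : p * (Real.log q2 - Real.log q1) ≤ p * (-((q1 - q2) / q1)) :=
    mul_le_mul_of_nonneg_left hB hp0.le
  have hexp : (1 - p) * ((q1 - q2) / (1 - q1)) + p * (-((q1 - q2) / q1)) =
      (q1 - q2) * ((1 - p) * q1 - p * (1 - q1)) / ((1 - q1) * q1) := by
    field_simp
    ring
  have hnum : (q1 - q2) * ((1 - p) * q1 - p * (1 - q1)) ≤ 0 := by nlinarith
  have hkey : (1 - p) * ((q1 - q2) / (1 - q1)) + p * (-((q1 - q2) / q1)) ≤ 0 := by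
    rw [hexp]
    exact div_nonpos_of_nonpos_of_nonneg hnum (by positivity)
  linarith

lemma mean_mem (w0 wa μ0 μa : ℝ) (hw0 : 0 ≤ w0) (hwa : 0 ≤ wa) (hs : 0 < w0 + wa)
    (haμ : μa < μ0) :
    μa ≤ (w0 * μ0 + wa * μa) / (w0 + wa) ∧ (w0 * μ0 + wa * μa) / (w0 + wa) ≤ μ0 := by
  constructor
  · rw [le_div_iff₀ hs]; nlinarith
  · rw [div_le_iff₀ hs]; nlinarith

lemma compensation (w0 wa μ0 μa m z : ℝ) (hs : 0 < w0 + wa)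
    (ha0 : 0 < μa) (haμ : μa < μ0) (h01 : μ0 < 1)
    (hm0 : 0 < m) (hm1 : m < 1)
    (hmm : (w0 + wa) * m = w0 * μ0 + wa * μa)
    (hz0 : 0 < z) (hz1 : z < 1) :
    w0 * kl μ0 z + wa * kl μa z
      = w0 * kl μ0 m + wa * kl μa m + (w0 + wa) * kl m z := by
  have h00 : 0 < μ0 := lt_trans ha0 haμ
  have ha1 : μa < 1 := lt_trans haμ h01
  rw [kl_expand μ0 z h00 h01 hz0 hz1, kl_expand μa z ha0 ha1 hz0 hz1,
      kl_expand μ0 m h00 h01 hm0 hm1, kl_expand μa m ha0 ha1 hm0 hm1,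
      kl_expand m z hm0 hm1 hz0 hz1]
  linear_combination (Real.log z - Real.log m + Real.log (1 - m) - Real.log (1 - z)) * hmm

lemma Ialpha_eq (w0 wa μ0 μa : ℝ) (hs : 0 < w0 + wa) :
    (w0 + wa) * Ialpha (w0 / (w0 + wa)) μ0 μa
      = w0 * kl μ0 ((w0 * μ0 + wa * μa) / (w0 + wa))
        + wa * kl μa ((w0 * μ0 + wa * μa) / (w0 + wa)) := by
  have hα : (w0 / (w0 + wa)) * μ0 + (1 - w0 / (w0 + wa)) * μa
      = (w0 * μ0 + wa * μa) / (w0 + wa) := by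
    field_simp
    try ring
  unfold Ialpha
  rw [hα]
  field_simp
  try ring

/-- the vector `w*` built from `x₁(y*) = 1` and `xₐ(y*) = gₐ⁻¹(y*)`, where
`y*` solves `F_μ(y*) = 1`, is the unique maximizer of `G` over the simplex.
Arm `1` of the paper is index `0`, arm `2` is index `1`. -/
theorem wstar_unique_maximizer (K : ℕ) (μ : Fin (K + 2) → ℝ)
    (hpos : ∀ a, 0 < μ a) (h1 : μ 0 < 1) (h2 : μ 1 < μ 0)
    (hsort : ∀ a b : Fin (K + 2), a ≠ 0 → a ≤ b → μ b ≤ μ a)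
    (x : Fin (K + 2) → ℝ → ℝ)
    (hx : ∀ a : Fin (K + 2), a ≠ 0 → ∀ y ∈ Set.Ico 0 (kl (μ 0) (μ a)),
      0 ≤ x a y ∧ garm (μ 0) (μ a) (x a y) = y)
    (ystar : ℝ) (hystar : ystar ∈ Set.Ioo 0 (kl (μ 0) (μ 1)))
    (hroot : ∑ a ∈ Finset.univ.erase (0 : Fin (K + 2)),
      kl (μ 0) (marm (μ 0) (μ a) (x a ystar)) /
        kl (μ a) (marm (μ 0) (μ a) (x a ystar)) = 1) :
    let xv : Fin (K + 2) → ℝ := fun a => if a = 0 then 1 else x a ystar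
    let wstar : Fin (K + 2) → ℝ := fun a => xv a / ∑ b, xv b
    wstar ∈ simplex (K + 2) ∧
    (∀ w ∈ simplex (K + 2), G K μ w ≤ G K μ wstar) ∧
    (∀ w ∈ simplex (K + 2), (∀ w' ∈ simplex (K + 2), G K μ w' ≤ G K μ w) → w = wstar) := by
  intro xv wstar
  have hone0 : (1 : Fin (K + 2)) ≠ 0 := by simp [Fin.ext_iff]
  have h1A : (1 : Fin (K + 2)) ∈ (Finset.univ : Finset (Fin (K + 2))).erase 0 :=
    Finset.mem_erase.mpr ⟨hone0, Finset.mem_univ _⟩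
  have h00 : 0 < μ 0 := hpos 0
  -- basic facts about the arms a ≠ 0
  have hμle : ∀ a ∈ (Finset.univ : Finset (Fin (K + 2))).erase 0, μ a ≤ μ 1 := by
    intro a ha
    have ha0 : a ≠ 0 := (Finset.mem_erase.mp ha).1
    refine hsort 1 a hone0 ?_
    rw [Fin.le_def, Fin.val_one]
    have := Fin.pos_of_ne_zero ha0
    rw [Fin.lt_def, Fin.val_zero] at this
    omega
  have hμ0a : ∀ a ∈ (Finset.univ : Finset (Fin (K + 2))).erase 0, μ a < μ 0 :=
    fun a ha => lt_of_le_of_lt (hμle a ha) h2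
  -- x a ystar facts
  have hxg : ∀ a ∈ (Finset.univ : Finset (Fin (K + 2))).erase 0,
      0 ≤ x a ystar ∧ garm (μ 0) (μ a) (x a ystar) = ystar := by
    intro a ha
    refine hx a (Finset.mem_erase.mp ha).1 ystar
      ⟨hystar.1.le, lt_of_lt_of_le hystar.2 (kl_mono (μ 0) (μ 1) (μ a) (hpos a) (hμle a ha) h2 h1)⟩
  -- marm facts
  have hmarm : ∀ a ∈ (Finset.univ : Finset (Fin (K + 2))).erase 0,
      μ a < marm (μ 0) (μ a) (x a ystar) ∧ marm (μ 0) (μ a) (x a ystar) ≤ μ 0 := by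
    intro a ha
    have hx0 := (hxg a ha).1
    have h1x : (0:ℝ) < 1 + x a ystar := by linarith
    unfold marm
    constructor
    · rw [lt_div_iff₀ h1x]; nlinarith [hμ0a a ha]
    · rw [div_le_iff₀ h1x]; nlinarith [hμ0a a ha]
  have hmarm0 : ∀ a ∈ (Finset.univ : Finset (Fin (K + 2))).erase 0,
      0 < marm (μ 0) (μ a) (x a ystar) ∧ marm (μ 0) (μ a) (x a ystar) < 1 :=
    fun a ha => ⟨lt_trans (hpos a) (hmarm a ha).1, lt_of_le_of_lt (hmarm a ha).2 h1⟩
  have hβpos : ∀ a ∈ (Finset.univ : Finset (Fin (K + 2))).erase 0,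
      0 < kl (μ a) (marm (μ 0) (μ a) (x a ystar)) := by
    intro a ha
    exact kl_pos (μ a) _ (hpos a) (lt_trans (hμ0a a ha) h1) (hmarm0 a ha).1 (hmarm0 a ha).2
      (ne_of_lt (hmarm a ha).1)
  have hαnn : ∀ a ∈ (Finset.univ : Finset (Fin (K + 2))).erase 0,
      0 ≤ kl (μ 0) (marm (μ 0) (μ a) (x a ystar)) := by
    intro a ha
    exact kl_nonneg (μ 0) _ h00 h1 (hmarm0 a ha).1 (hmarm0 a ha).2
  -- the identity ystar = α_a + x_a β_a
  have hy : ∀ a ∈ (Finset.univ : Finset (Fin (K + 2))).erase 0,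
      ystar = kl (μ 0) (marm (μ 0) (μ a) (x a ystar))
        + x a ystar * kl (μ a) (marm (μ 0) (μ a) (x a ystar)) := by
    intro a ha
    have := (hxg a ha).2
    unfold garm at this
    linarith
  -- the normalization S
  have hS : ∑ b, xv b = 1 + ∑ a ∈ (Finset.univ : Finset (Fin (K + 2))).erase 0, x a ystar := by
    rw [← Finset.add_sum_erase Finset.univ xv (Finset.mem_univ 0)]
    have h0 : xv 0 = 1 := by simp [xv]
    have hrest : ∑ a ∈ (Finset.univ : Finset (Fin (K + 2))).erase 0, xv a
        = ∑ a ∈ (Finset.univ : Finset (Fin (K + 2))).erase 0, x a ystar :=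
      Finset.sum_congr rfl fun a ha => by simp [xv, (Finset.mem_erase.mp ha).1]
    rw [h0, hrest]
  have hxsum_nn : 0 ≤ ∑ a ∈ (Finset.univ : Finset (Fin (K + 2))).erase 0, x a ystar :=
    Finset.sum_nonneg fun a ha => (hxg a ha).1
  have hSpos : 0 < ∑ b, xv b := by rw [hS]; linarith
  set S := ∑ b, xv b with hSdef
  -- the key sum identity : ∑ ystar / β_a = S
  have hsumy : ∑ a ∈ (Finset.univ : Finset (Fin (K + 2))).erase 0,
      ystar / kl (μ a) (marm (μ 0) (μ a) (x a ystar)) = S := by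
    have hterm : ∀ a ∈ (Finset.univ : Finset (Fin (K + 2))).erase 0,
        ystar / kl (μ a) (marm (μ 0) (μ a) (x a ystar))
          = kl (μ 0) (marm (μ 0) (μ a) (x a ystar)) / kl (μ a) (marm (μ 0) (μ a) (x a ystar))
            + x a ystar := by
      intro a ha
      rw [div_eq_iff (hβpos a ha).ne', add_mul, div_mul_cancel₀ _ (hβpos a ha).ne']
      linarith [hy a ha]
    rw [Finset.sum_congr rfl hterm, Finset.sum_add_distrib, hroot, hS]
  -- wstar is in the simplex
  have hxvnn : ∀ a, 0 ≤ xv a := by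
    intro a
    by_cases h : a = 0
    · simp [xv, h]
    · simp only [xv, if_neg h]
      exact (hxg a (Finset.mem_erase.mpr ⟨h, Finset.mem_univ _⟩)).1
  have hwsimplex : wstar ∈ simplex (K + 2) := by
    constructor
    · exact fun a => div_nonneg (hxvnn a) hSpos.le
    · rw [← Finset.sum_div, div_self hSpos.ne']
  -- value of each term at wstar
  have hw0 : wstar 0 = 1 / S := by simp [wstar, xv]; rfl
  have hwa : ∀ a ∈ (Finset.univ : Finset (Fin (K + 2))).erase 0,
      wstar a = x a ystar / S := by
    intro a ha
    simp [wstar, xv, if_neg (Finset.mem_erase.mp ha).1]; rfl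
  have hterm_star : ∀ a ∈ (Finset.univ : Finset (Fin (K + 2))).erase 0,
      (if wstar 0 + wstar a = 0 then 0
        else (wstar 0 + wstar a) * Ialpha (wstar 0 / (wstar 0 + wstar a)) (μ 0) (μ a))
        = ystar / S := by
    intro a ha
    have hx0 := (hxg a ha).1
    have hsum : wstar 0 + wstar a = (1 + x a ystar) / S := by
      rw [hw0, hwa a ha, ← add_div]
    have hspos : 0 < wstar 0 + wstar a := by
      rw [hsum]; positivity
    rw [if_neg hspos.ne', Ialpha_eq _ _ _ _ hspos]
    have hmean : (wstar 0 * μ 0 + wstar a * μ a) / (wstar 0 + wstar a)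
        = marm (μ 0) (μ a) (x a ystar) := by
      rw [hw0, hwa a ha]
      unfold marm
      have hd : (0:ℝ) < 1 / S + x a ystar / S := by
        rw [← add_div]
        exact div_pos (by linarith) hSpos
      have h1x : (0:ℝ) < 1 + x a ystar := by linarith
      rw [div_eq_div_iff hd.ne' h1x.ne']
      ring
    rw [hmean, hw0, hwa a ha]
    rw [div_mul_eq_mul_div, div_mul_eq_mul_div, ← add_div, one_mul]
    congr 1
    linarith [hy a ha]
  have hGstar : G K μ wstar = ystar / S := by
    unfold G
    apply le_antisymm
    · exact (Finset.inf'_le _ h1A).trans_eq (hterm_star 1 h1A)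
    · exact Finset.le_inf' _ _ fun a ha => (hterm_star a ha).ge
  have hyS : 0 < ystar / S := div_pos hystar.1 hSpos
  -- the generic upper bound f_a(w) ≤ w0 α_a + wa β_a
  have hbound : ∀ w ∈ simplex (K + 2), ∀ a ∈ (Finset.univ : Finset (Fin (K + 2))).erase 0,
      0 < w 0 + w a →
      (w 0 + w a) * Ialpha (w 0 / (w 0 + w a)) (μ 0) (μ a)
        ≤ w 0 * kl (μ 0) (marm (μ 0) (μ a) (x a ystar))
          + w a * kl (μ a) (marm (μ 0) (μ a) (x a ystar)) := by
    intro w hw a ha hspos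
    obtain ⟨hm1, hm2⟩ := mean_mem (w 0) (w a) (μ 0) (μ a) (hw.1 0) (hw.1 a) hspos (hμ0a a ha)
    have hM0 : 0 < (w 0 * μ 0 + w a * μ a) / (w 0 + w a) := lt_of_lt_of_le (hpos a) hm1
    have hM1 : (w 0 * μ 0 + w a * μ a) / (w 0 + w a) < 1 := lt_of_le_of_lt hm2 h1
    have hmm : (w 0 + w a) * ((w 0 * μ 0 + w a * μ a) / (w 0 + w a)) = w 0 * μ 0 + w a * μ a :=
      mul_div_cancel₀ _ hspos.ne'
    have hcomp := compensation (w 0) (w a) (μ 0) (μ a)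
      ((w 0 * μ 0 + w a * μ a) / (w 0 + w a)) (marm (μ 0) (μ a) (x a ystar)) hspos
      (hpos a) (hμ0a a ha) h1 hM0 hM1 hmm (hmarm0 a ha).1 (hmarm0 a ha).2
    have hklnn : 0 ≤ kl ((w 0 * μ 0 + w a * μ a) / (w 0 + w a)) (marm (μ 0) (μ a) (x a ystar)) :=
      kl_nonneg _ _ hM0 hM1 (hmarm0 a ha).1 (hmarm0 a ha).2
    rw [Ialpha_eq _ _ _ _ hspos]
    nlinarith [mul_nonneg hspos.le hklnn]
  -- the global upper bound
  have hub : ∀ w ∈ simplex (K + 2), G K μ w ≤ ystar / S := by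
    intro w hw
    by_contra hcon
    push_neg at hcon
    have hall : ∀ a ∈ (Finset.univ : Finset (Fin (K + 2))).erase 0,
        ystar / S < (if w 0 + w a = 0 then 0
          else (w 0 + w a) * Ialpha (w 0 / (w 0 + w a)) (μ 0) (μ a)) := by
      intro a ha
      exact lt_of_lt_of_le hcon (Finset.inf'_le _ ha)
    have hlow : ∀ a ∈ (Finset.univ : Finset (Fin (K + 2))).erase 0,
        (ystar / S - w 0 * kl (μ 0) (marm (μ 0) (μ a) (x a ystar)))
          / kl (μ a) (marm (μ 0) (μ a) (x a ystar)) < w a := by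
      intro a ha
      have h := hall a ha
      by_cases hz : w 0 + w a = 0
      · rw [if_pos hz] at h; linarith
      · rw [if_neg hz] at h
        have hspos : 0 < w 0 + w a :=
          lt_of_le_of_ne (add_nonneg (hw.1 0) (hw.1 a)) (Ne.symm hz)
        have hb := hbound w hw a ha hspos
        rw [div_lt_iff₀ (hβpos a ha)]
        nlinarith
    have hsumlt := Finset.sum_lt_sum_of_nonempty (erase_zero_nonempty K) hlow
    have hsumL : ∑ a ∈ (Finset.univ : Finset (Fin (K + 2))).erase 0,
        (ystar / S - w 0 * kl (μ 0) (marm (μ 0) (μ a) (x a ystar)))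
          / kl (μ a) (marm (μ 0) (μ a) (x a ystar)) = 1 - w 0 := by
      have hterm : ∀ a ∈ (Finset.univ : Finset (Fin (K + 2))).erase 0,
          (ystar / S - w 0 * kl (μ 0) (marm (μ 0) (μ a) (x a ystar)))
            / kl (μ a) (marm (μ 0) (μ a) (x a ystar))
          = (ystar / kl (μ a) (marm (μ 0) (μ a) (x a ystar))) * (1 / S)
            - w 0 * (kl (μ 0) (marm (μ 0) (μ a) (x a ystar))
                / kl (μ a) (marm (μ 0) (μ a) (x a ystar))) := by
        intro a ha
        have hb := (hβpos a ha).ne'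
        have hs := hSpos.ne'
        field_simp
      rw [Finset.sum_congr rfl hterm, Finset.sum_sub_distrib, ← Finset.sum_mul,
        ← Finset.mul_sum, hsumy, hroot, mul_one, mul_one_div, div_self hSpos.ne']
    have hwsum : ∑ a ∈ (Finset.univ : Finset (Fin (K + 2))).erase 0, w a = 1 - w 0 := by
      have := hw.2
      rw [← Finset.add_sum_erase Finset.univ w (Finset.mem_univ 0)] at this
      linarith
    rw [hsumL, hwsum] at hsumlt
    linarith
  refine ⟨hwsimplex, fun w hw => (hub w hw).trans_eq hGstar.symm, ?_⟩
  -- uniqueness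
  intro w hw hmax
  have hGw : G K μ w = ystar / S :=
    le_antisymm (hub w hw) (hGstar ▸ hmax wstar hwsimplex)
  have hge : ∀ a ∈ (Finset.univ : Finset (Fin (K + 2))).erase 0,
      ystar / S ≤ (if w 0 + w a = 0 then 0
        else (w 0 + w a) * Ialpha (w 0 / (w 0 + w a)) (μ 0) (μ a)) := by
    intro a ha
    calc ystar / S = G K μ w := hGw.symm
    _ ≤ _ := Finset.inf'_le _ ha
  have hposs : ∀ a ∈ (Finset.univ : Finset (Fin (K + 2))).erase 0, 0 < w 0 + w a := by
    intro a ha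
    have h := hge a ha
    by_cases hz : w 0 + w a = 0
    · rw [if_pos hz] at h; linarith
    · exact lt_of_le_of_ne (add_nonneg (hw.1 0) (hw.1 a)) (Ne.symm hz)
  have hfa : ∀ a ∈ (Finset.univ : Finset (Fin (K + 2))).erase 0,
      ystar / S ≤ (w 0 + w a) * Ialpha (w 0 / (w 0 + w a)) (μ 0) (μ a) := by
    intro a ha
    have h := hge a ha
    rwa [if_neg (hposs a ha).ne'] at h
  -- lower bounds on w a
  have hlow : ∀ a ∈ (Finset.univ : Finset (Fin (K + 2))).erase 0,
      (ystar / S - w 0 * kl (μ 0) (marm (μ 0) (μ a) (x a ystar)))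
        / kl (μ a) (marm (μ 0) (μ a) (x a ystar)) ≤ w a := by
    intro a ha
    have hb := hbound w hw a ha (hposs a ha)
    rw [div_le_iff₀ (hβpos a ha)]
    nlinarith [hfa a ha]
  -- sum of lower bounds equals the sum of the w a
  have hsumL : ∑ a ∈ (Finset.univ : Finset (Fin (K + 2))).erase 0,
      (ystar / S - w 0 * kl (μ 0) (marm (μ 0) (μ a) (x a ystar)))
        / kl (μ a) (marm (μ 0) (μ a) (x a ystar)) = 1 - w 0 := by
    have hterm : ∀ a ∈ (Finset.univ : Finset (Fin (K + 2))).erase 0,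
        (ystar / S - w 0 * kl (μ 0) (marm (μ 0) (μ a) (x a ystar)))
          / kl (μ a) (marm (μ 0) (μ a) (x a ystar))
        = (ystar / kl (μ a) (marm (μ 0) (μ a) (x a ystar))) * (1 / S)
          - w 0 * (kl (μ 0) (marm (μ 0) (μ a) (x a ystar))
              / kl (μ a) (marm (μ 0) (μ a) (x a ystar))) := by
      intro a ha
      have hb := (hβpos a ha).ne'
      have hs := hSpos.ne'
      field_simp
    rw [Finset.sum_congr rfl hterm, Finset.sum_sub_distrib, ← Finset.sum_mul,
      ← Finset.mul_sum, hsumy, hroot, mul_one, mul_one_div, div_self hSpos.ne']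
  have hwsum : ∑ a ∈ (Finset.univ : Finset (Fin (K + 2))).erase 0, w a = 1 - w 0 := by
    have := hw.2
    rw [← Finset.add_sum_erase Finset.univ w (Finset.mem_univ 0)] at this
    linarith
  have heq : ∀ a ∈ (Finset.univ : Finset (Fin (K + 2))).erase 0,
      w a = (ystar / S - w 0 * kl (μ 0) (marm (μ 0) (μ a) (x a ystar)))
        / kl (μ a) (marm (μ 0) (μ a) (x a ystar)) := by
    intro a ha
    have hsums : (∑ a ∈ (Finset.univ : Finset (Fin (K + 2))).erase 0,
          (ystar / S - w 0 * kl (μ 0) (marm (μ 0) (μ a) (x a ystar)))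
            / kl (μ a) (marm (μ 0) (μ a) (x a ystar)))
        = ∑ a ∈ (Finset.univ : Finset (Fin (K + 2))).erase 0, w a := by
      rw [hwsum, hsumL]
    exact (((Finset.sum_eq_sum_iff_of_le hlow).mp hsums) a ha).symm
  -- w 0 > 0
  have hw0pos : 0 < w 0 := by
    rcases lt_or_eq_of_le (hw.1 0) with h | h
    · exact h
    have hI : Ialpha (w 0 / (w 0 + w 1)) (μ 0) (μ 1) = 0 := by
      rw [← h, zero_div] at *
      have e : (0:ℝ) * μ 0 + (1 - 0) * μ 1 = μ 1 := by ring
      unfold Ialpha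
      rw [e, zero_mul, zero_add, sub_zero, one_mul]
      exact kl_self (μ 1) (hpos 1) (lt_trans h2 h1)
    have := hfa 1 h1A
    rw [hI, mul_zero] at this
    linarith
  -- for each a, w a = x a ystar * w 0
  have hprop : ∀ a ∈ (Finset.univ : Finset (Fin (K + 2))).erase 0,
      w a = x a ystar * w 0 := by
    intro a ha
    have hspos := hposs a ha
    -- equality w0 α + wa β = ystar/S
    have heqv : w 0 * kl (μ 0) (marm (μ 0) (μ a) (x a ystar))
        + w a * kl (μ a) (marm (μ 0) (μ a) (x a ystar)) = ystar / S := by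
      have h := heq a ha
      rw [eq_div_iff (hβpos a ha).ne'] at h
      linarith
    have hb := hbound w hw a ha hspos
    have hfa' := hfa a ha
    have hIeq : (w 0 + w a) * Ialpha (w 0 / (w 0 + w a)) (μ 0) (μ a)
        = w 0 * kl (μ 0) (marm (μ 0) (μ a) (x a ystar))
          + w a * kl (μ a) (marm (μ 0) (μ a) (x a ystar)) := by
      linarith
    -- from equality, the mean of w equals marm
    obtain ⟨hm1, hm2⟩ := mean_mem (w 0) (w a) (μ 0) (μ a) (hw.1 0) (hw.1 a) hspos (hμ0a a ha)
    have hM0 : 0 < (w 0 * μ 0 + w a * μ a) / (w 0 + w a) := lt_of_lt_of_le (hpos a) hm1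
    have hM1 : (w 0 * μ 0 + w a * μ a) / (w 0 + w a) < 1 := lt_of_le_of_lt hm2 h1
    have hmm : (w 0 + w a) * ((w 0 * μ 0 + w a * μ a) / (w 0 + w a)) = w 0 * μ 0 + w a * μ a :=
      mul_div_cancel₀ _ hspos.ne'
    have hcomp := compensation (w 0) (w a) (μ 0) (μ a)
      ((w 0 * μ 0 + w a * μ a) / (w 0 + w a)) (marm (μ 0) (μ a) (x a ystar)) hspos
      (hpos a) (hμ0a a ha) h1 hM0 hM1 hmm (hmarm0 a ha).1 (hmarm0 a ha).2
    have hIeq2 := Ialpha_eq (w 0) (w a) (μ 0) (μ a) hspos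
    have hklz : (w 0 + w a) * kl ((w 0 * μ 0 + w a * μ a) / (w 0 + w a))
        (marm (μ 0) (μ a) (x a ystar)) = 0 := by
      linarith
    have hkl0 : kl ((w 0 * μ 0 + w a * μ a) / (w 0 + w a)) (marm (μ 0) (μ a) (x a ystar)) = 0 := by
      rcases mul_eq_zero.mp hklz with h | h
      · exact absurd h hspos.ne'
      · exact h
    have hMeq : (w 0 * μ 0 + w a * μ a) / (w 0 + w a) = marm (μ 0) (μ a) (x a ystar) :=
      kl_eq_zero _ _ hM0 hM1 (hmarm0 a ha).1 (hmarm0 a ha).2 hkl0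
    -- cross multiply
    have hx0 := (hxg a ha).1
    have h1x : (0:ℝ) < 1 + x a ystar := by linarith
    unfold marm at hMeq
    rw [div_eq_div_iff hspos.ne' h1x.ne'] at hMeq
    have hfac : (μ 0 - μ a) * (x a ystar * w 0 - w a) = 0 := by linear_combination hMeq
    rcases mul_eq_zero.mp hfac with h | h
    · exact absurd h (sub_ne_zero.mpr (hμ0a a ha).ne')
    · linarith
  -- conclude w 0 = 1/S and w = wstar
  have hw0S : w 0 * S = 1 := by
    have h := hw.2
    rw [← Finset.add_sum_erase Finset.univ w (Finset.mem_univ 0),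
      Finset.sum_congr rfl hprop, ← Finset.sum_mul] at h
    rw [hS]
    linarith [h]
  have hw0val : w 0 = 1 / S := by
    rw [eq_div_iff hSpos.ne']
    exact hw0S
  funext a
  by_cases ha : a = 0
  · rw [ha, hw0val, hw0]
  · have haA : a ∈ (Finset.univ : Finset (Fin (K + 2))).erase 0 :=
      Finset.mem_erase.mpr ⟨ha, Finset.mem_univ _⟩
    rw [hprop a haA, hwa a haA, hw0val, mul_one_div]
end

section
/- Let K ≥ 2 and 0 < μ_K ≤ … ≤ μ_2 < μ_1 < 1. If w* ∈ Σ_K is a maximizer over Σ_K of the objective G(w) = min_{a≠1} (w_1+w_a)·I_{w_1/(w_1+w_a)}(μ_1,μ_a), then w*_2 ≥ w*_3 ≥ … ≥ w*_K. -/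
lemma kl_expand_s9 {x y : ℝ} (hx : 0 < x) (hx1 : x < 1) (hy : 0 < y) (hy1 : y < 1) :
    kl x y = x*(Real.log x - Real.log y) + (1-x)*(Real.log (1-x) - Real.log (1-y)) := by
  unfold kl
  rw [Real.log_div hx.ne' hy.ne', Real.log_div (by linarith) (by linarith)]

lemma kl_nonneg_s9 {x y : ℝ} (hx : 0 < x) (hx1 : x < 1) (hy : 0 < y) (hy1 : y < 1) :
    0 ≤ kl x y := by
  have h1 := Real.log_le_sub_one_of_pos (show 0 < y/x by positivity)
  have h2 := Real.log_le_sub_one_of_pos (show 0 < (1-y)/(1-x) by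
    apply div_pos <;> linarith)
  have e1 : Real.log (x/y) = - Real.log (y/x) := by rw [← Real.log_inv, inv_div]
  have e2 : Real.log ((1-x)/(1-y)) = - Real.log ((1-y)/(1-x)) := by
    rw [← Real.log_inv, inv_div]
  have a1 : x * Real.log (y/x) ≤ y - x := by
    calc x * Real.log (y/x) ≤ x * (y/x - 1) := by
          exact mul_le_mul_of_nonneg_left h1 hx.le
      _ = y - x := by field_simp
  have a2 : (1-x) * Real.log ((1-y)/(1-x)) ≤ (1-y) - (1-x) := by
    calc (1-x) * Real.log ((1-y)/(1-x)) ≤ (1-x) * ((1-y)/(1-x) - 1) := by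
          exact mul_le_mul_of_nonneg_left h2 (by linarith)
      _ = (1-y) - (1-x) := by
          have hx2 : (1:ℝ) - x ≠ 0 := by linarith
          field_simp
  unfold kl
  rw [e1, e2]
  linarith

lemma kl_pos_s9 {x y : ℝ} (hx : 0 < x) (hx1 : x < 1) (hy : 0 < y) (hy1 : y < 1)
    (hne : x ≠ y) : 0 < kl x y := by
  have h1 : Real.log (y/x) < y/x - 1 := by
    apply Real.log_lt_sub_one_of_pos (by positivity)
    intro h
    exact hne (by field_simp at h; linarith)
  have h2 := Real.log_le_sub_one_of_pos (show 0 < (1-y)/(1-x) by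
    apply div_pos <;> linarith)
  have e1 : Real.log (x/y) = - Real.log (y/x) := by rw [← Real.log_inv, inv_div]
  have e2 : Real.log ((1-x)/(1-y)) = - Real.log ((1-y)/(1-x)) := by
    rw [← Real.log_inv, inv_div]
  have a1 : x * Real.log (y/x) < y - x := by
    calc x * Real.log (y/x) < x * (y/x - 1) := by
          exact mul_lt_mul_of_pos_left h1 hx
      _ = y - x := by field_simp
  have a2 : (1-x) * Real.log ((1-y)/(1-x)) ≤ (1-y) - (1-x) := by
    calc (1-x) * Real.log ((1-y)/(1-x)) ≤ (1-x) * ((1-y)/(1-x) - 1) := by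
          exact mul_le_mul_of_nonneg_left h2 (by linarith)
      _ = (1-y) - (1-x) := by
          have hx2 : (1:ℝ) - x ≠ 0 := by linarith
          field_simp
  unfold kl
  rw [e1, e2]
  linarith

lemma kl_self_s9 {y : ℝ} (hy : 0 < y) (hy1 : y < 1) : kl y y = 0 := by
  unfold kl
  rw [div_self hy.ne', div_self (by linarith : (1:ℝ)-y ≠ 0), Real.log_one]
  ring

/-- kl is nondecreasing in second argument above the first. -/
lemma kl_mono_right {x y1 y2 : ℝ} (hx : 0 < x) (hxy : x ≤ y1) (hy : y1 ≤ y2) (hy1 : y2 < 1) :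
    kl x y1 ≤ kl x y2 := by
  have hy1p : 0 < y1 := lt_of_lt_of_le hx hxy
  have hy2p : 0 < y2 := lt_of_lt_of_le hy1p hy
  have hy1lt : y1 < 1 := lt_of_le_of_lt hy hy1
  have hx1 : x < 1 := lt_of_le_of_lt hxy hy1lt
  -- kl x y2 - kl x y1 = x (log y1 - log y2) + (1-x)(log(1-y1) - log(1-y2))
  rw [kl_expand_s9 hx hx1 hy1p hy1lt, kl_expand_s9 hx hx1 hy2p hy1]
  -- use log(y1/y2) ≥ 1 - y2/y1  and log((1-y1)/(1-y2)) ≥ 1 - (1-y2)/(1-y1)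
  have h1 : 1 - y2/y1 ≤ Real.log y1 - Real.log y2 := by
    have := Real.log_le_sub_one_of_pos (show 0 < y2/y1 by positivity)
    rw [Real.log_div hy2p.ne' hy1p.ne'] at this
    linarith
  have h2 : 1 - (1-y2)/(1-y1) ≤ Real.log (1-y1) - Real.log (1-y2) := by
    have := Real.log_le_sub_one_of_pos (show 0 < (1-y2)/(1-y1) by
      apply div_pos <;> linarith)
    rw [Real.log_div (by linarith) (by linarith)] at this
    linarith
  have k1 : x * (1 - y2/y1) ≤ x * (Real.log y1 - Real.log y2) :=
    mul_le_mul_of_nonneg_left h1 hx.le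
  have k2 : (1-x) * (1 - (1-y2)/(1-y1)) ≤ (1-x) * (Real.log (1-y1) - Real.log (1-y2)) :=
    mul_le_mul_of_nonneg_left h2 (by linarith)
  have key : 0 ≤ x * (1 - y2/y1) + (1-x) * (1 - (1-y2)/(1-y1)) := by
    have hne1 : y1 ≠ 0 := hy1p.ne'
    have hne2 : (1:ℝ) - y1 ≠ 0 := by linarith
    have emul : (x * (1 - y2/y1) + (1-x) * (1 - (1-y2)/(1-y1))) * (y1 * (1-y1))
        = (y2 - y1) * (y1 - x) := by field_simp; ring
    have hc : 0 < y1 * (1-y1) := by nlinarith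
    have hd : 0 ≤ (y2 - y1) * (y1 - x) := by nlinarith
    nlinarith [emul, hc, hd]
  linarith

/-- kl is nonincreasing in second argument below the first. -/
lemma kl_anti_right {x y1 y2 : ℝ} (hy : 0 < y1) (h12 : y1 ≤ y2) (hyx : y2 ≤ x) (hx1 : x < 1) :
    kl x y2 ≤ kl x y1 := by
  have hy2p : 0 < y2 := lt_of_lt_of_le hy h12
  have hy2lt : y2 < 1 := lt_of_le_of_lt hyx hx1
  have hy1lt : y1 < 1 := lt_of_le_of_lt h12 hy2lt
  have hx : 0 < x := lt_of_lt_of_le hy2p hyx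
  rw [kl_expand_s9 hx hx1 hy hy1lt, kl_expand_s9 hx hx1 hy2p hy2lt]
  have h1 : 1 - y1/y2 ≤ Real.log y2 - Real.log y1 := by
    have := Real.log_le_sub_one_of_pos (show 0 < y1/y2 by positivity)
    rw [Real.log_div hy.ne' hy2p.ne'] at this
    linarith
  have h2 : 1 - (1-y1)/(1-y2) ≤ Real.log (1-y2) - Real.log (1-y1) := by
    have := Real.log_le_sub_one_of_pos (show 0 < (1-y1)/(1-y2) by
      apply div_pos <;> linarith)
    rw [Real.log_div (by linarith) (by linarith)] at this
    linarith
  have k1 : x * (1 - y1/y2) ≤ x * (Real.log y2 - Real.log y1) :=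
    mul_le_mul_of_nonneg_left h1 hx.le
  have k2 : (1-x) * (1 - (1-y1)/(1-y2)) ≤ (1-x) * (Real.log (1-y2) - Real.log (1-y1)) :=
    mul_le_mul_of_nonneg_left h2 (by linarith)
  have key : 0 ≤ x * (1 - y1/y2) + (1-x) * (1 - (1-y1)/(1-y2)) := by
    have hne1 : y2 ≠ 0 := hy2p.ne'
    have hne2 : (1:ℝ) - y2 ≠ 0 := by linarith
    have emul : (x * (1 - y1/y2) + (1-x) * (1 - (1-y1)/(1-y2))) * (y2 * (1-y2))
        = (y2 - y1) * (x - y2) := by field_simp; ring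
    have hc : 0 < y2 * (1-y2) := by nlinarith
    have hd : 0 ≤ (y2 - y1) * (x - y2) := by nlinarith
    nlinarith [emul, hc, hd]
  linarith

/-- kl is nonincreasing in first argument below the second. -/
lemma kl_anti_left {x1 x2 z : ℝ} (hx1 : 0 < x1) (h12 : x1 ≤ x2) (hxz : x2 ≤ z) (hz1 : z < 1) :
    kl x2 z ≤ kl x1 z := by
  have hx2p : 0 < x2 := lt_of_lt_of_le hx1 h12
  have hx2lt : x2 < 1 := lt_of_le_of_lt hxz hz1
  have hx1lt : x1 < 1 := lt_of_le_of_lt h12 hx2lt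
  have hzp : 0 < z := lt_of_lt_of_le hx2p hxz
  -- kl x1 z = kl x1 x2 + x1 (log x2 - log z) + (1-x1)(log(1-x2) - log(1-z))
  rw [kl_expand_s9 hx1 hx1lt hzp hz1, kl_expand_s9 hx2p hx2lt hzp hz1]
  have hkl12 : 0 ≤ kl x1 x2 := kl_nonneg_s9 hx1 hx1lt hx2p hx2lt
  rw [kl_expand_s9 hx1 hx1lt hx2p hx2lt] at hkl12
  have hlog : Real.log (x2) - Real.log z ≤ Real.log (1-x2) - Real.log (1-z) := by
    have l1 : Real.log x2 ≤ Real.log z := Real.log_le_log hx2p hxz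
    have l2 : Real.log (1-z) ≤ Real.log (1-x2) := Real.log_le_log (by linarith) (by linarith)
    linarith
  nlinarith [mul_le_mul_of_nonneg_left hlog (show (0:ℝ) ≤ x2 - x1 by linarith)]

/-- the mixture mean. -/
noncomputable def mm (p q x y : ℝ) : ℝ := (p*x + q*y)/(p+q)

/-- the weighted objective in un-normalized form. -/
noncomputable def gfun (p q x y : ℝ) : ℝ :=
  p * kl x (mm p q x y) + q * kl y (mm p q x y)

lemma mm_le {p q x y : ℝ} (hp : 0 ≤ p) (hq : 0 ≤ q) (hpq : 0 < p + q) (hyx : y ≤ x) :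
    y ≤ mm p q x y ∧ mm p q x y ≤ x := by
  unfold mm
  constructor
  · rw [le_div_iff₀ hpq]; nlinarith
  · rw [div_le_iff₀ hpq]; nlinarith

lemma mm_lt {p q x y : ℝ} (hp : 0 < p) (hq : 0 ≤ q) (hyx : y < x) :
    y < mm p q x y := by
  unfold mm
  rw [lt_div_iff₀ (by linarith)]
  nlinarith

lemma mm_anti {p q1 q2 x y : ℝ} (hp : 0 ≤ p) (hq1 : 0 ≤ q1) (hq : q1 ≤ q2)
    (hpq1 : 0 < p + q1) (hyx : y ≤ x) : mm p q2 x y ≤ mm p q1 x y := by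
  unfold mm
  have hpq2 : 0 < p + q2 := by linarith
  rw [div_le_div_iff₀ hpq2 hpq1]
  nlinarith [mul_nonneg (mul_nonneg hp (sub_nonneg.mpr hq)) (sub_nonneg.mpr hyx)]

/-- The chord/variational lemma: the mixture mean minimizes the weighted KL sum. -/
lemma chord {p q x y z : ℝ} (hp : 0 ≤ p) (hq : 0 ≤ q) (hpq : 0 < p + q)
    (hx : 0 < x) (hx1 : x < 1) (hy : 0 < y) (hy1 : y < 1) (hz : 0 < z) (hz1 : z < 1)
    (hyx : y ≤ x) :
    gfun p q x y ≤ p * kl x z + q * kl y z := by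
  set m := mm p q x y with hmdef
  have hmm : m * (p + q) = p*x + q*y := by
    rw [hmdef]; unfold mm; field_simp
  have hm0 : 0 < m := by
    nlinarith [mul_pos hpq hy, mul_nonneg hp (sub_nonneg.mpr hyx)]
  have hm1 : m < 1 := by
    nlinarith [mul_pos hpq (show 0 < 1 - x by linarith), mul_nonneg hq (sub_nonneg.mpr hyx)]
  have key : p * kl x z + q * kl y z - gfun p q x y = (p+q) * kl m z := by
    unfold gfun
    rw [← hmdef]
    rw [kl_expand_s9 hx hx1 hz hz1, kl_expand_s9 hy hy1 hz hz1, kl_expand_s9 hx hx1 hm0 hm1,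
      kl_expand_s9 hy hy1 hm0 hm1, kl_expand_s9 hm0 hm1 hz hz1]
    linear_combination ((Real.log z - Real.log m) - (Real.log (1-z) - Real.log (1-m))) * hmm
  have := kl_nonneg_s9 hm0 hm1 hz hz1
  nlinarith

/-- monotonicity of gfun in both weights. -/
lemma gfun_mono {p1 p2 q1 q2 x y : ℝ} (hp1 : 0 ≤ p1) (hq1 : 0 ≤ q1) (hpq1 : 0 < p1 + q1)
    (hp : p1 ≤ p2) (hq : q1 ≤ q2)
    (hx : 0 < x) (hx1 : x < 1) (hy : 0 < y) (hy1 : y < 1) (hyx : y ≤ x) :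
    gfun p1 q1 x y ≤ gfun p2 q2 x y := by
  have hp2 : 0 ≤ p2 := le_trans hp1 hp
  have hq2 : 0 ≤ q2 := le_trans hq1 hq
  have hpq2 : 0 < p2 + q2 := by linarith
  have hm := mm_le hp2 hq2 hpq2 hyx
  have hm0 : 0 < mm p2 q2 x y := lt_of_lt_of_le hy hm.1
  have hm1 : mm p2 q2 x y < 1 := lt_of_le_of_lt hm.2 hx1
  calc gfun p1 q1 x y ≤ p1 * kl x (mm p2 q2 x y) + q1 * kl y (mm p2 q2 x y) :=
        chord hp1 hq1 hpq1 hx hx1 hy hy1 hm0 hm1 hyx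
    _ ≤ p2 * kl x (mm p2 q2 x y) + q2 * kl y (mm p2 q2 x y) := by
        have n1 := kl_nonneg_s9 hx hx1 hm0 hm1
        have n2 := kl_nonneg_s9 hy hy1 hm0 hm1
        nlinarith
    _ = gfun p2 q2 x y := rfl

/-- quantitative increase in q. -/
lemma gfun_gain {p q1 q2 x y : ℝ} (hp : 0 ≤ p) (hq1 : 0 ≤ q1) (hpq1 : 0 < p + q1)
    (hq : q1 ≤ q2) (hx : 0 < x) (hx1 : x < 1) (hy : 0 < y) (hy1 : y < 1) (hyx : y ≤ x) :
    gfun p q1 x y + (q2 - q1) * kl y (mm p q2 x y) ≤ gfun p q2 x y := by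
  have hq2 : 0 ≤ q2 := le_trans hq1 hq
  have hpq2 : 0 < p + q2 := by linarith
  have hm := mm_le hp hq2 hpq2 hyx
  have hm0 : 0 < mm p q2 x y := lt_of_lt_of_le hy hm.1
  have hm1 : mm p q2 x y < 1 := lt_of_le_of_lt hm.2 hx1
  have := chord hp hq1 hpq1 hx hx1 hy hy1 hm0 hm1 hyx (z := mm p q2 x y)
  unfold gfun at *
  nlinarith

/-- quantitative bound for decrease in q: `gfun p (q-ε) ≥ gfun p q - ε·kl y x`. -/
lemma gfun_drop {p q1 q2 x y : ℝ} (hp : 0 ≤ p) (hq1 : 0 ≤ q1) (hpq1 : 0 < p + q1)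
    (hq : q1 ≤ q2) (hx : 0 < x) (hx1 : x < 1) (hy : 0 < y) (hy1 : y < 1) (hyx : y ≤ x) :
    gfun p q2 x y - (q2 - q1) * kl y x ≤ gfun p q1 x y := by
  have hq2 : 0 ≤ q2 := le_trans hq1 hq
  have hpq2 : 0 < p + q2 := by linarith
  have hm := mm_le hp hq1 hpq1 hyx
  have hm0 : 0 < mm p q1 x y := lt_of_lt_of_le hy hm.1
  have hm1 : mm p q1 x y < 1 := lt_of_le_of_lt hm.2 hx1
  -- gfun p q2 ≤ p kl x m1 + q2 kl y m1 = gfun p q1 + (q2-q1) kl y m1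
  have hch := chord hp hq2 hpq2 hx hx1 hy hy1 hm0 hm1 hyx (z := mm p q1 x y)
  have hklm : kl y (mm p q1 x y) ≤ kl y x := by
    rcases eq_or_lt_of_le hyx with h | h
    · have hmx : mm p q1 x y = x := by
        unfold mm; rw [← h]; rw [div_eq_iff hpq1.ne']; ring
      rw [hmx]
    · exact kl_mono_right hy hm.1 hm.2 hx1
  unfold gfun at *
  nlinarith

/-- gfun is nonincreasing in y below x. -/
lemma gfun_anti_y {p q x y y' : ℝ} (hp : 0 ≤ p) (hq : 0 ≤ q) (hpq : 0 < p + q)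
    (hy' : 0 < y') (h12 : y' ≤ y) (hyx : y ≤ x) (hx1 : x < 1) :
    gfun p q x y ≤ gfun p q x y' := by
  have hy : 0 < y := lt_of_lt_of_le hy' h12
  have hy1 : y < 1 := lt_of_le_of_lt hyx hx1
  have hy'1 : y' < 1 := lt_of_le_of_lt h12 hy1
  have hx : 0 < x := lt_of_lt_of_le hy hyx
  have hy'x : y' ≤ x := le_trans h12 hyx
  have hm' := mm_le hp hq hpq hy'x
  set m' := mm p q x y' with hm'def
  have hm'0 : 0 < m' := lt_of_lt_of_le hy' hm'.1
  have hm'1 : m' < 1 := lt_of_le_of_lt hm'.2 hx1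
  rcases le_or_gt y m' with hc | hc
  · calc gfun p q x y ≤ p * kl x m' + q * kl y m' :=
          chord hp hq hpq hx hx1 hy hy1 hm'0 hm'1 hyx
      _ ≤ p * kl x m' + q * kl y' m' := by
          have := kl_anti_left hy' h12 hc hm'1
          nlinarith
      _ = gfun p q x y' := rfl
  · calc gfun p q x y ≤ p * kl x y + q * kl y y :=
          chord hp hq hpq hx hx1 hy hy1 hy hy1 hyx
      _ = p * kl x y := by rw [kl_self_s9 hy hy1]; ring
      _ ≤ p * kl x m' := by
          have := kl_anti_right hm'0 hc.le hyx hx1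
          nlinarith
      _ ≤ p * kl x m' + q * kl y' m' := by
          have := kl_nonneg_s9 hy' hy'1 hm'0 hm'1
          nlinarith
      _ = gfun p q x y' := rfl

lemma mm_lt_x {p q x y : ℝ} (hp : 0 ≤ p) (hq : 0 < q) (hyx : y < x) :
    mm p q x y < x := by
  unfold mm
  rw [div_lt_iff₀ (by linarith)]
  nlinarith

lemma gfun_pos {p q x y : ℝ} (hp : 0 < p) (hq : 0 < q) (hy : 0 < y) (hyx : y < x)
    (hx1 : x < 1) : 0 < gfun p q x y := by
  have hpq : 0 < p + q := by linarith
  have hm := mm_le hp.le hq.le hpq hyx.le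
  have hmx : mm p q x y < x := mm_lt_x hp.le hq hyx
  have hm0 : 0 < mm p q x y := lt_of_lt_of_le hy hm.1
  have hm1 : mm p q x y < 1 := lt_trans hmx hx1
  have hx : 0 < x := lt_trans hy hyx
  have k1 : 0 < kl x (mm p q x y) := kl_pos_s9 hx hx1 hm0 hm1 hmx.ne'
  have k2 : 0 ≤ kl y (mm p q x y) := kl_nonneg_s9 hy (lt_trans hyx hx1) hm0 hm1
  unfold gfun
  nlinarith

lemma Ialpha_eq_s9 {p q x y : ℝ} (hpq : 0 < p + q) :
    (p+q) * Ialpha (p/(p+q)) x y = gfun p q x y := by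
  have hne : p + q ≠ 0 := hpq.ne'
  unfold Ialpha gfun mm
  have hα : p/(p+q) * x + (1 - p/(p+q)) * y = (p*x+q*y)/(p+q) := by
    field_simp
    ring
  rw [hα]
  field_simp
  ring

lemma Ialpha_zero {x y : ℝ} (hy : 0 < y) (hy1 : y < 1) : Ialpha 0 x y = 0 := by
  unfold Ialpha
  rw [show (0:ℝ)*x + (1-0)*y = y by ring, kl_self_s9 hy hy1]
  ring

/-- if the suboptimal means are sorted in decreasing order, then any
maximizer `w*` of `G` over the simplex has `w*₂ ≥ w*₃ ≥ … ≥ w*_K`.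
Arm `1` of the paper is index `0`, arm `2` is index `1`. -/
theorem maximizer_monotone (K : ℕ) (μ : Fin (K + 2) → ℝ)
    (hpos : ∀ a, 0 < μ a) (h1 : μ 0 < 1) (h2 : μ 1 < μ 0)
    (hsort : ∀ a b : Fin (K + 2), a ≠ 0 → a ≤ b → μ b ≤ μ a)
    (wstar : Fin (K + 2) → ℝ) (hws : wstar ∈ simplex (K + 2))
    (hmax : ∀ w ∈ simplex (K + 2), G K μ w ≤ G K μ wstar) :
    ∀ a b : Fin (K + 2), a ≠ 0 → a ≤ b → wstar b ≤ wstar a := by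
  obtain ⟨hw_nonneg, hw_sum⟩ := hws
  have h1ne : (1 : Fin (K+2)) ≠ 0 := by simp [Fin.ext_iff]
  have hμlt : ∀ d : Fin (K+2), d ≠ 0 → μ d < μ 0 := by
    intro d hd
    have hle : (1 : Fin (K+2)) ≤ d := by
      rw [Fin.le_def]
      have hv : d.val ≠ 0 := fun h => hd (Fin.ext h)
      simp only [Fin.val_one]
      omega
    exact lt_of_le_of_lt (hsort 1 d h1ne hle) h2
  have hμ1 : ∀ d : Fin (K+2), d ≠ 0 → μ d < 1 := fun d hd => (hμlt d hd).trans h1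
  have hx0 : 0 < μ 0 := hpos 0
  -- the uniform vector witnesses positivity of the optimal value
  set u : Fin (K+2) → ℝ := fun _ => 1/(K+2) with hu
  have hupos : (0:ℝ) < 1/(K+2) := by positivity
  have hu_mem : u ∈ simplex (K+2) := by
    constructor
    · intro a; exact hupos.le
    · rw [Finset.sum_const, Finset.card_univ, Fintype.card_fin, nsmul_eq_mul]
      field_simp
      norm_cast
  have hGu : 0 < G K μ u := by
    rw [G, Finset.lt_inf'_iff]
    intro d hd
    have hd0 : d ≠ 0 := (Finset.mem_erase.mp hd).1
    have hsum : 0 < u 0 + u d := by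
      have : u 0 = 1/(K+2) := rfl
      have : u d = 1/(K+2) := rfl
      simp only [hu]
      positivity
    rw [if_neg hsum.ne', Ialpha_eq_s9 hsum]
    exact gfun_pos hupos hupos (hpos d) (hμlt d hd0) h1
  have hGs : 0 < G K μ wstar := lt_of_lt_of_le hGu (hmax u hu_mem)
  -- G wstar is below every term
  have hterm : ∀ d : Fin (K+2), d ≠ 0 → 0 < wstar 0 + wstar d →
      G K μ wstar ≤ gfun (wstar 0) (wstar d) (μ 0) (μ d) := by
    intro d hd hp'
    have hmem : d ∈ (Finset.univ : Finset (Fin (K+2))).erase 0 :=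
      Finset.mem_erase.mpr ⟨hd, Finset.mem_univ d⟩
    have h := Finset.inf'_le
      (fun a => if wstar 0 + wstar a = 0 then 0
        else (wstar 0 + wstar a) * Ialpha (wstar 0 / (wstar 0 + wstar a)) (μ 0) (μ a)) hmem
    simp only [if_neg hp'.ne'] at h
    rw [Ialpha_eq_s9 hp'] at h
    exact h
  -- wstar 0 > 0
  have hw0 : 0 < wstar 0 := by
    rcases (hw_nonneg 0).lt_or_eq with h | h
    · exact h
    exfalso
    have h0 : wstar 0 = 0 := h.symm
    have hmem : (1 : Fin (K+2)) ∈ (Finset.univ : Finset (Fin (K+2))).erase 0 :=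
      Finset.mem_erase.mpr ⟨h1ne, Finset.mem_univ _⟩
    have hle := Finset.inf'_le
      (fun a => if wstar 0 + wstar a = 0 then 0
        else (wstar 0 + wstar a) * Ialpha (wstar 0 / (wstar 0 + wstar a)) (μ 0) (μ a)) hmem
    have hz : (if wstar 0 + wstar 1 = 0 then (0:ℝ)
        else (wstar 0 + wstar 1) * Ialpha (wstar 0 / (wstar 0 + wstar 1)) (μ 0) (μ 1)) = 0 := by
      by_cases hc : wstar 0 + wstar 1 = 0
      · rw [if_pos hc]
      · rw [if_neg hc, h0, zero_div, Ialpha_zero (hpos 1) (hμ1 1 h1ne)]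
        ring
    rw [hz] at hle
    have : G K μ wstar ≤ 0 := hle
    linarith
  -- main argument
  intro a b ha hab
  by_contra hcon
  push_neg at hcon
  have hb : b ≠ 0 := by
    intro h
    exact ha (Fin.le_zero_iff.mp (h ▸ hab))
  have hba : μ b ≤ μ a := hsort a b ha hab
  have hya : μ a < μ 0 := hμlt a ha
  have hyb0 : 0 < μ b := hpos b
  have hya0 : 0 < μ a := hpos a
  have hpa : 0 < wstar 0 + wstar a := by linarith [hw_nonneg a]
  have hpb : 0 < wstar 0 + wstar b := by linarith [hw_nonneg b]
  have hta := hterm a ha hpa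
  have htb := hterm b hb hpb
  rcases le_or_gt (gfun (wstar 0) (wstar b) (μ 0) (μ b)) (G K μ wstar) with hc | hc
  · -- the term of b is at the minimum: monotonicity contradiction
    have e1 : gfun (wstar 0) (wstar b) (μ 0) (μ a) ≤ gfun (wstar 0) (wstar b) (μ 0) (μ b) :=
      gfun_anti_y hw0.le (hw_nonneg b) hpb hyb0 hba hya.le h1
    set m2 := mm (wstar 0) (wstar b) (μ 0) (μ a) with hm2
    have e2 : gfun (wstar 0) (wstar a) (μ 0) (μ a) + (wstar b - wstar a) * kl (μ a) m2
        ≤ gfun (wstar 0) (wstar b) (μ 0) (μ a) :=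
      gfun_gain hw0.le (hw_nonneg a) hpa hcon.le hx0 h1 hya0 (hμ1 a ha) hya.le
    have hm2b := mm_le hw0.le (hw_nonneg b) hpb hya.le
    have hm2lt : μ a < m2 := mm_lt hw0 (hw_nonneg b) hya
    have e3 : 0 < kl (μ a) m2 :=
      kl_pos_s9 hya0 (hμ1 a ha) (lt_trans hya0 hm2lt) (lt_of_le_of_lt hm2b.2 h1) hm2lt.ne
    nlinarith [mul_pos (sub_pos.mpr hcon) e3]
  · -- the term of b is strictly above the minimum: perturbation contradiction
    have hsbpos : 0 < wstar b := by
      rcases (hw_nonneg b).lt_or_eq with h | h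
      · exact h
      exfalso
      have hzero : gfun (wstar 0) (wstar b) (μ 0) (μ b) = 0 := by
        rw [← h]
        unfold gfun mm
        rw [show wstar 0 * μ 0 + 0 * μ b = wstar 0 * μ 0 by ring, add_zero,
          mul_div_cancel_left₀ _ hw0.ne', kl_self_s9 hx0 h1]
        ring
      rw [hzero] at hc
      linarith
    have hC : 0 ≤ kl (μ b) (μ 0) := kl_nonneg_s9 hyb0 (hμ1 b hb) hx0 h1
    obtain ⟨ε, hε, hεb, hεC⟩ : ∃ ε : ℝ, 0 < ε ∧ ε ≤ wstar b ∧
        ε * kl (μ b) (μ 0) < gfun (wstar 0) (wstar b) (μ 0) (μ b) - G K μ wstar := by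
      set C := kl (μ b) (μ 0) with hCdef
      set tb := gfun (wstar 0) (wstar b) (μ 0) (μ b) with htbdef
      refine ⟨min (wstar b) ((tb - G K μ wstar)/(2*(C+1))), ?_, min_le_left _ _, ?_⟩
      · apply lt_min hsbpos
        apply div_pos (by linarith) (by linarith)
      · set ε := min (wstar b) ((tb - G K μ wstar)/(2*(C+1))) with hεdef
        have hε : 0 < ε := by
          apply lt_min hsbpos
          apply div_pos (by linarith) (by linarith)
        have h1' : ε ≤ (tb - G K μ wstar)/(2*(C+1)) := min_le_right _ _
        have h2' : ε * C ≤ ε * (C+1) := by nlinarith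
        have h3' : ε * (C+1) ≤ (tb - G K μ wstar)/(2*(C+1)) * (C+1) := by
          apply mul_le_mul_of_nonneg_right h1' (by linarith)
        have h4' : (tb - G K μ wstar)/(2*(C+1)) * (C+1) = (tb - G K μ wstar)/2 := by
          field_simp
        linarith
    obtain ⟨δ, hδ, hδε⟩ : ∃ δ : ℝ, 0 < δ ∧ ((K:ℝ)+1) * δ = ε := by
      refine ⟨ε/(K+1), by positivity, ?_⟩
      field_simp
    set w' : Fin (K+2) → ℝ := fun t => wstar t + (if t = b then -ε else δ) with hw'def
    have hw'0 : w' 0 = wstar 0 + δ := by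
      simp only [hw'def]
      rw [if_neg (Ne.symm hb)]
    have hw'b : w' b = wstar b - ε := by
      simp only [hw'def]
      norm_num
      ring
    have hw'd : ∀ d, d ≠ b → w' d = wstar d + δ := by
      intro d hd
      simp only [hw'def]
      rw [if_neg hd]
    have hw'mem : w' ∈ simplex (K+2) := by
      constructor
      · intro t
        by_cases ht : t = b
        · rw [ht, hw'b]; linarith
        · rw [hw'd t ht]; linarith [hw_nonneg t]
      · have hsum2 : ∑ t : Fin (K+2), (if t = b then -ε else δ) = 0 := by
          have e : ∀ t : Fin (K+2), (if t = b then -ε else δ)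
              = (if t = b then -ε - δ else 0) + δ := by
            intro t; by_cases ht : t = b <;> simp [ht]
          rw [Finset.sum_congr rfl (fun t _ => e t), Finset.sum_add_distrib,
            Finset.sum_ite_eq' Finset.univ b (fun _ => -ε - δ), if_pos (Finset.mem_univ b),
            Finset.sum_const, Finset.card_univ, Fintype.card_fin, nsmul_eq_mul]
          push_cast
          linarith [hδε]
        simp only [hw'def]
        rw [Finset.sum_add_distrib, hw_sum, hsum2, add_zero]
    have hlt : G K μ wstar < G K μ w' := by
      conv_rhs => rw [G]
      rw [Finset.lt_inf'_iff]
      intro d hd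
      have hd0 : d ≠ 0 := (Finset.mem_erase.mp hd).1
      by_cases hdb : d = b
      · subst hdb
        rw [hw'0, hw'b]
        have hq1 : 0 ≤ wstar d - ε := by linarith
        have hpq' : 0 < wstar 0 + δ + (wstar d - ε) := by linarith
        rw [if_neg hpq'.ne', Ialpha_eq_s9 hpq']
        have s1 : gfun (wstar 0) (wstar d - ε) (μ 0) (μ d)
            ≤ gfun (wstar 0 + δ) (wstar d - ε) (μ 0) (μ d) :=
          gfun_mono hw0.le hq1 (by linarith) (by linarith) le_rfl hx0 h1 (hpos d)
            (hμ1 d hd0) (hμlt d hd0).le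
        have s2 : gfun (wstar 0) (wstar d) (μ 0) (μ d) - ε * kl (μ d) (μ 0)
            ≤ gfun (wstar 0) (wstar d - ε) (μ 0) (μ d) := by
          have := gfun_drop (q1 := wstar d - ε) (q2 := wstar d) hw0.le hq1
            (by linarith) (by linarith) hx0 h1 (hpos d) (hμ1 d hd0) (hμlt d hd0).le
          linarith
        linarith
      · rw [hw'0, hw'd d hdb]
        have hq0 : 0 ≤ wstar d := hw_nonneg d
        have hpq' : 0 < wstar 0 + δ + (wstar d + δ) := by linarith
        rw [if_neg hpq'.ne', Ialpha_eq_s9 hpq']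
        have hGd := hterm d hd0 (by linarith)
        have s2 : gfun (wstar 0) (wstar d) (μ 0) (μ d) + δ * kl (μ d) (mm (wstar 0) (wstar d + δ) (μ 0) (μ d))
            ≤ gfun (wstar 0) (wstar d + δ) (μ 0) (μ d) := by
          have := gfun_gain (q1 := wstar d) (q2 := wstar d + δ) hw0.le hq0
            (by linarith) (by linarith) hx0 h1 (hpos d) (hμ1 d hd0) (hμlt d hd0).le
          linarith
        have s1 : gfun (wstar 0) (wstar d + δ) (μ 0) (μ d)
            ≤ gfun (wstar 0 + δ) (wstar d + δ) (μ 0) (μ d) :=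
          gfun_mono hw0.le (by linarith) (by linarith) (by linarith) le_rfl hx0 h1 (hpos d)
            (hμ1 d hd0) (hμlt d hd0).le
        have hmlt : μ d < mm (wstar 0) (wstar d + δ) (μ 0) (μ d) := mm_lt hw0 (by linarith) (hμlt d hd0)
        have hmle := mm_le hw0.le (by linarith : 0 ≤ wstar d + δ) (by linarith) (hμlt d hd0).le
        have s3 : 0 < kl (μ d) (mm (wstar 0) (wstar d + δ) (μ 0) (μ d)) :=
          kl_pos_s9 (hpos d) (hμ1 d hd0) (lt_trans (hpos d) hmlt) (lt_of_le_of_lt hmle.2 h1)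
            hmlt.ne
        nlinarith [mul_pos hδ s3]
    linarith [hmax w' hw'mem]
end
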